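/- For q ≥ 3 and d ≥ 0, the number of d-dimensional faces of 𝕃²_q equals binomial(q(q-1)/2, d+1) + q * binomial(q-1, d). -/

import Mathlib

/-- The big facet `F₀` of `𝕃²_q`: all non-diagonal unordered pairs `{i,j}`, `i < j`. -/
def L2F0 (q : ℕ) : Finset (Sym2 (Fin q)) :=
  Finset.univ.filter (fun e => ¬ e.IsDiag)

/-- The facet `F_k` of `𝕃²_q`: all pairs `{k, j}` with `j ∈ {1,...,q}`. -/
def L2F (q : ℕ) (k : Fin q) : Finset (Sym2 (Fin q)) :=
  Finset.univ.image (fun j : Fin q => s(k, j))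

/-- Faces of `𝕃²_q`: subsets of `F₀` or of some `F_k`. -/
def L2IsFace (q : ℕ) (σ : Finset (Sym2 (Fin q))) : Prop :=
  σ ⊆ L2F0 q ∨ ∃ k : Fin q, σ ⊆ L2F q k

/-- Facets of `𝕃²_q`: maximal faces. -/
def L2IsFacet (q : ℕ) (σ : Finset (Sym2 (Fin q))) : Prop :=
  L2IsFace q σ ∧ ∀ τ : Finset (Sym2 (Fin q)), L2IsFace q τ → σ ⊆ τ → σ = τ

instance (q : ℕ) : DecidablePred (L2IsFace q) := fun σ => by
  unfold L2IsFace; infer_instance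

instance (q : ℕ) : DecidablePred (L2IsFacet q) := fun σ => by
  unfold L2IsFacet; infer_instance

lemma L2F0_mem (q : ℕ) (e : Sym2 (Fin q)) : e ∈ L2F0 q ↔ ¬ e.IsDiag := by
  simp [L2F0]

lemma L2F_mem (q : ℕ) (k : Fin q) (e : Sym2 (Fin q)) :
    e ∈ L2F q k ↔ ∃ j, s(k, j) = e := by
  simp [L2F]

lemma L2F_diag_mem (q : ℕ) (k i : Fin q) (h : s(i, i) ∈ L2F q k) : i = k := by
  rw [L2F_mem] at h
  obtain ⟨j, hj⟩ := h
  rcases Sym2.eq_iff.mp hj with ⟨h1, h2⟩ | ⟨h1, h2⟩ <;> exact h1.symm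

lemma L2F0_card (q : ℕ) : (L2F0 q).card = q * (q - 1) / 2 := by
  have h := Sym2.card_subtype_not_diag (α := Fin q)
  rw [Fintype.card_subtype] at h
  simpa [L2F0, Nat.choose_two_right, Fintype.card_fin] using h

lemma L2F_card (q : ℕ) (k : Fin q) : (L2F q k).card = q := by
  rw [L2F, Finset.card_image_of_injective _ ?_, Finset.card_univ, Fintype.card_fin]
  intro a b hab
  rcases Sym2.eq_iff.mp hab with ⟨_, h⟩ | ⟨h1, h2⟩
  · exact h
  · exact h2.trans h1

/-- For `q ≥ 3` and `d ≥ 0`, the number of `d`-dimensional faces of `𝕃²_q` equals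
`binomial(q(q-1)/2, d+1) + q * binomial(q-1, d)`. -/
theorem L2_card_faces (q : ℕ) (hq : 3 ≤ q) (d : ℕ) :
    (Finset.univ.filter
        (fun σ : Finset (Sym2 (Fin q)) => L2IsFace q σ ∧ σ.card = d + 1)).card =
      Nat.choose (q * (q - 1) / 2) (d + 1) + q * Nat.choose (q - 1) d := by
  classical
  set A : Finset (Finset (Sym2 (Fin q))) := (L2F0 q).powersetCard (d + 1) with hA
  set B : Fin q → Finset (Finset (Sym2 (Fin q))) := fun i =>
    (((L2F q i).erase s(i, i)).powersetCard d).image (insert s(i, i)) with hB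
  have hdiagF : ∀ i : Fin q, s(i, i) ∈ L2F q i := by
    intro i; rw [L2F_mem]; exact ⟨i, rfl⟩
  -- membership in B i
  have hBmem : ∀ (i : Fin q) (σ : Finset (Sym2 (Fin q))),
      σ ∈ B i ↔ s(i, i) ∈ σ ∧ σ ⊆ L2F q i ∧ σ.card = d + 1 := by
    intro i σ
    constructor
    · intro h
      rw [hB] at h
      simp only [Finset.mem_image, Finset.mem_powersetCard] at h
      obtain ⟨τ, ⟨hsub, hcard⟩, rfl⟩ := h
      have hnot : s(i, i) ∉ τ := fun hin => (Finset.mem_erase.mp (hsub hin)).1 rfl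
      refine ⟨Finset.mem_insert_self _ _, ?_, ?_⟩
      · intro e he
        rcases Finset.mem_insert.mp he with rfl | he
        · exact hdiagF i
        · exact Finset.mem_of_mem_erase (hsub he)
      · rw [Finset.card_insert_of_notMem hnot, hcard]
    · rintro ⟨h1, h2, h3⟩
      rw [hB]
      simp only [Finset.mem_image, Finset.mem_powersetCard]
      refine ⟨σ.erase s(i, i), ⟨?_, ?_⟩, Finset.insert_erase h1⟩
      · exact Finset.erase_subset_erase _ h2
      · rw [Finset.card_erase_of_mem h1, h3]; rfl
  have key : Finset.univ.filter
      (fun σ : Finset (Sym2 (Fin q)) => L2IsFace q σ ∧ σ.card = d + 1)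
      = A ∪ Finset.univ.biUnion B := by
    ext σ
    rw [Finset.mem_filter, Finset.mem_union, Finset.mem_biUnion, hA,
      Finset.mem_powersetCard]
    constructor
    · rintro ⟨-, hface, hcard⟩
      by_cases hdiag : ∃ e ∈ σ, e.IsDiag
      · obtain ⟨e, he, hd⟩ := hdiag
        obtain ⟨i, rfl⟩ : ∃ i, e = s(i, i) := by
          induction e using Sym2.inductionOn with
          | hf a b => exact ⟨a, by rw [Sym2.mk_isDiag_iff.mp hd]⟩
        have hsubF : ∃ k, σ ⊆ L2F q k := by
          rcases hface with h | h
          · exact absurd (Sym2.mk_isDiag_iff.mpr rfl) ((L2F0_mem q _).mp (h he))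
          · exact h
        obtain ⟨k, hk⟩ := hsubF
        have : i = k := L2F_diag_mem q k i (hk he)
        subst this
        exact Or.inr ⟨i, Finset.mem_univ i, (hBmem i σ).mpr ⟨he, hk, hcard⟩⟩
      · push_neg at hdiag
        refine Or.inl ⟨?_, hcard⟩
        intro e he
        exact (L2F0_mem q e).mpr (hdiag e he)
    · rintro (⟨hsub, hcard⟩ | ⟨i, -, hBi⟩)
      · exact ⟨Finset.mem_univ σ, Or.inl hsub, hcard⟩
      · obtain ⟨h1, h2, h3⟩ := (hBmem i σ).mp hBi
        exact ⟨Finset.mem_univ σ, Or.inr ⟨i, h2⟩, h3⟩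
  rw [key]
  have hdisj : Disjoint A (Finset.univ.biUnion B) := by
    rw [Finset.disjoint_left]
    intro σ hAσ hBσ
    rw [hA, Finset.mem_powersetCard] at hAσ
    rw [Finset.mem_biUnion] at hBσ
    obtain ⟨i, -, hBi⟩ := hBσ
    obtain ⟨h1, -, -⟩ := (hBmem i σ).mp hBi
    exact ((L2F0_mem q _).mp (hAσ.1 h1)) (Sym2.mk_isDiag_iff.mpr rfl)
  rw [Finset.card_union_of_disjoint hdisj]
  congr 1
  · rw [hA, Finset.card_powersetCard, L2F0_card]
  · rw [Finset.card_biUnion]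
    · have hcardB : ∀ i : Fin q, (B i).card = Nat.choose (q - 1) d := by
        intro i
        rw [hB]
        rw [Finset.card_image_of_injOn, Finset.card_powersetCard,
          Finset.card_erase_of_mem (hdiagF i), L2F_card]
        intro s hs t ht hst
        rw [Finset.mem_coe, Finset.mem_powersetCard] at hs ht
        have hs' : s(i, i) ∉ s := fun h => (Finset.mem_erase.mp (hs.1 h)).1 rfl
        have ht' : s(i, i) ∉ t := fun h => (Finset.mem_erase.mp (ht.1 h)).1 rfl
        rw [← Finset.erase_insert hs', ← Finset.erase_insert ht', hst]
      simp only [hcardB]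
      rw [Finset.sum_const, Finset.card_univ, Fintype.card_fin, smul_eq_mul]
    · rintro i - j - hij
      rw [Function.onFun, Finset.disjoint_left]
      intro σ hσi hσj
      obtain ⟨h1i, h2i, -⟩ := (hBmem i σ).mp hσi
      obtain ⟨h1j, -, -⟩ := (hBmem j σ).mp hσj
      exact hij (L2F_diag_mem q i j (h2i h1j)).symm
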